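/- Let F be a free commutative monoid of finite rank, R ⊆ F × F a congruence, and x ∈ F. Set F' = F ⊕ ℕt and let R' be the congruence on F' generated by R and the pair (t + x, 0). Then (R : x^∞) = R' ∩ (F × F), where (R : x^∞) = {(a,b) ∈ F × F : ∃ n ≥ 1, (a + n·x, b + n·x) ∈ R}. -/

import Mathlib

/-- Let `F = ℕᵏ`, `R` a congruence on `F`, and `x ∈ F`.  Let
`F' = F ⊕ ℕt = ℕᵏ × ℕ` and let `R'` be the congruence on `F'` generated by (the image of)
`R` and the pair `(t + x, 0)`.  Then the saturation
`(R : x^∞) = {(a,b) : ∃ n ≥ 1, (a + n·x, b + n·x) ∈ R}` equals `R' ∩ (F × F)`. -/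
theorem saturation_eq_elimination (k : ℕ) (R : AddCon (Fin k → ℕ)) (x : Fin k → ℕ) :
    ∀ a b : Fin k → ℕ,
      (∃ n : ℕ, 1 ≤ n ∧ R (a + n • x) (b + n • x)) ↔
      addConGen (fun u v : (Fin k → ℕ) × ℕ =>
          (∃ s t : Fin k → ℕ, u = (s, 0) ∧ v = (t, 0) ∧ R s t) ∨
          (u = (x, 1) ∧ v = 0))
        (a, 0) (b, 0) := by
  set gen := (fun u v : (Fin k → ℕ) × ℕ =>
      (∃ s t : Fin k → ℕ, u = (s, 0) ∧ v = (t, 0) ∧ R s t) ∨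
      (u = (x, 1) ∧ v = 0)) with hgen
  set c' := addConGen gen with hc'
  intro a b
  constructor
  · rintro ⟨n, hn, hR⟩
    have hx : c' (x, 1) 0 := AddConGen.Rel.of _ _ (Or.inr ⟨rfl, rfl⟩)
    have hnx : c' (n • ((x, 1) : (Fin k → ℕ) × ℕ)) 0 := by
      simpa using c'.nsmul n hx
    have key : ∀ u : Fin k → ℕ, c' (u + n • x, n) (u, 0) := by
      intro u
      have h := c'.add (c'.refl (u, 0)) hnx
      simpa [Prod.ext_iff] using h
    have hmid : c' (a + n • x, n) (b + n • x, n) := by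
      have h0 : c' (a + n • x, 0) (b + n • x, 0) :=
        AddConGen.Rel.of _ _ (Or.inl ⟨_, _, rfl, rfl, hR⟩)
      have h := c'.add h0 (c'.refl ((0, n) : (Fin k → ℕ) × ℕ))
      simpa using h
    exact c'.trans (c'.trans (c'.symm (key a)) hmid) (key b)
  · intro h
    -- a congruence containing the generators
    let S : AddCon ((Fin k → ℕ) × ℕ) :=
      { r := fun u v => ∃ p q : ℕ, u.2 + p = v.2 + q ∧ R (u.1 + p • x) (v.1 + q • x)
        iseqv := by
          refine ⟨fun u => ⟨0, 0, rfl, by simpa using R.refl u.1⟩,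
            fun {u v} ⟨p, q, hpq, hr⟩ => ⟨q, p, hpq.symm, R.symm hr⟩,
            fun {u v w} ⟨p, q, hpq, hr⟩ ⟨p', q', hpq', hr'⟩ => ?_⟩
          refine ⟨p + p', q' + q, by omega, ?_⟩
          have h1 : R (u.1 + p • x + p' • x) (v.1 + q • x + p' • x) :=
            R.add hr (R.refl (p' • x))
          have h2 : R (v.1 + p' • x + q • x) (w.1 + q' • x + q • x) :=
            R.add hr' (R.refl (q • x))
          have e1 : u.1 + (p + p') • x = u.1 + p • x + p' • x := by
            rw [add_smul]; ring
          have e2 : v.1 + q • x + p' • x = v.1 + p' • x + q • x := by ring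
          have e3 : w.1 + q' • x + q • x = w.1 + (q' + q) • x := by
            rw [add_smul]; ring
          rw [e1]
          exact R.trans (e2 ▸ h1) (e3 ▸ h2)
        add' := by
          rintro u v u' v' ⟨p, q, hpq, hr⟩ ⟨p', q', hpq', hr'⟩
          refine ⟨p + p', q + q', by simp only [Prod.snd_add]; omega, ?_⟩
          have e : (u + u').1 + (p + p') • x = (u.1 + p • x) + (u'.1 + p' • x) := by
            rw [Prod.fst_add, add_smul]; ring
          have e' : (v + v').1 + (q + q') • x = (v.1 + q • x) + (v'.1 + q' • x) := by
            rw [Prod.fst_add, add_smul]; ring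
          rw [e, e']
          exact R.add hr hr' }
    have hle : c' ≤ S := by
      rw [hc']
      refine AddCon.addConGen_le.mpr fun u v huv => ?_
      rcases huv with ⟨s, t, rfl, rfl, hst⟩ | ⟨rfl, rfl⟩
      · exact ⟨0, 0, rfl, by simpa using hst⟩
      · exact ⟨0, 1, rfl, by simpa using R.refl ((1 + 0 : ℕ) • x)⟩
    obtain ⟨p, q, hpq, hr⟩ := hle h
    simp only at hpq
    obtain rfl : p = q := by omega
    rcases Nat.eq_zero_or_pos p with rfl | hp
    · exact ⟨1, le_refl 1, by
        have := R.add hr (R.refl x)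
        simpa using this⟩
    · exact ⟨p, hp, hr⟩
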